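/- If m is odd, the group presented by generators b₁, b₂ and the single relation Br^m(b₁,b₂) (i.e., the alternating product b₁b₂b₁⋯ of length m equals b₂b₁b₂⋯ of length m) is isomorphic to the group presented by generators u, v with the single relation u² = vᵐ, via u = b₁b₂b₁⋯b₁ (length m, starting and ending with b₁) and v = b₁b₂. -/
import Mathlib


open FreeGroup

/-- The braid relator `Br^m(b₁,b₂)`: the alternating word of length `m` in `b₁,b₂`
times the inverse of the alternating word of length `m` in `b₂,b₁`. -/
def braidRelator (m : ℕ) : FreeGroup (Fin 2) :=
  ((of 0 * of 1) ^ (m / 2) * (of 0) ^ (m % 2)) *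
    ((of 1 * of 0) ^ (m / 2) * (of 1) ^ (m % 2))⁻¹

/-- The relator `u² v^{-m}` for the presentation `⟨u,v | u² = vᵐ⟩`. -/
def torusRelator (m : ℕ) : FreeGroup (Fin 2) :=
  (of 0) ^ 2 * ((of 1) ^ m)⁻¹

lemma relator_eq_one' {α : Type*} {rels : Set (FreeGroup α)} {r : FreeGroup α} (hr : r ∈ rels) :
    PresentedGroup.mk rels r = 1 :=
  (QuotientGroup.eq_one_iff _).2 (Subgroup.subset_normalClosure hr)

lemma semiconj_pow' {G : Type*} [Group G] (a b : G) (k : ℕ) :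
    a * (b * a) ^ k = (a * b) ^ k * a :=
  (SemiconjBy.pow_right (by simp [SemiconjBy, mul_assoc]) k)

lemma torus_rel_holds {G : Type*} [Group G] (a b : G) (k : ℕ)
    (h : (a * b) ^ k * a = (b * a) ^ k * b) :
    ((a * b) ^ k * a) ^ 2 = (a * b) ^ (2 * k + 1) := by
  calc ((a * b) ^ k * a) ^ 2
      = (a * b) ^ k * a * ((b * a) ^ k * b) := by rw [sq]; rw [h]
    _ = (a * b) ^ k * (a * (b * a) ^ k) * b := by group
    _ = (a * b) ^ k * ((a * b) ^ k * a) * b := by rw [semiconj_pow']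
    _ = (a * b) ^ k * (a * b) ^ k * (a * b) := by group
    _ = (a * b) ^ (2 * k + 1) := by rw [pow_succ, two_mul, pow_add]

lemma braid_rel_holds {G : Type*} [Group G] (u v : G) (k : ℕ)
    (h : u ^ 2 = v ^ (2 * k + 1)) :
    (((v ^ k)⁻¹ * u) * (u⁻¹ * v ^ (k + 1))) ^ k * ((v ^ k)⁻¹ * u) =
      ((u⁻¹ * v ^ (k + 1)) * ((v ^ k)⁻¹ * u)) ^ k * (u⁻¹ * v ^ (k + 1)) := by
  have hxy : ((v ^ k)⁻¹ * u) * (u⁻¹ * v ^ (k + 1)) = v := by group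
  have hyx : (u⁻¹ * v ^ (k + 1)) * ((v ^ k)⁻¹ * u) = u⁻¹ * v * (u⁻¹)⁻¹ := by group
  rw [hxy, hyx, conj_pow]
  calc v ^ k * ((v ^ k)⁻¹ * u) = u := by group
    _ = u⁻¹ * v ^ (2 * k + 1) := by rw [← h]; group
    _ = u⁻¹ * v ^ k * (u⁻¹)⁻¹ * (u⁻¹ * v ^ (k + 1)) := by
        rw [show 2 * k + 1 = k + (k + 1) by ring]; group

theorem dihedral_artin_iso_torus_odd (m : ℕ) (hm : Odd m) (h3 : 3 ≤ m) :
    ∃ e : PresentedGroup ({torusRelator m} : Set (FreeGroup (Fin 2))) ≃*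
        PresentedGroup ({braidRelator m} : Set (FreeGroup (Fin 2))),
      e (PresentedGroup.of 0) =
        (PresentedGroup.of 0 * PresentedGroup.of 1) ^ ((m - 1) / 2) * PresentedGroup.of 0 ∧
      e (PresentedGroup.of 1) = PresentedGroup.of 0 * PresentedGroup.of 1 := by
  obtain ⟨k, hk⟩ := hm
  have hdiv : m / 2 = k := by omega
  have hmod : m % 2 = 1 := by omega
  have hsub : (m - 1) / 2 = k := by omega
  have hk' : m = 2 * k + 1 := by omega
  set B := PresentedGroup ({braidRelator m} : Set (FreeGroup (Fin 2))) with hB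
  set T := PresentedGroup ({torusRelator m} : Set (FreeGroup (Fin 2))) with hT
  set a : B := PresentedGroup.of 0 with ha
  set b : B := PresentedGroup.of 1 with hb
  set u : T := PresentedGroup.of 0 with hu
  set v : T := PresentedGroup.of 1 with hv
  -- the braid relation in B
  have hbr : (a * b) ^ k * a = (b * a) ^ k * b := by
    have h1 : (a * b) ^ (m / 2) * a ^ (m % 2) * ((b * a) ^ (m / 2) * b ^ (m % 2))⁻¹ = 1 := by
      rw [ha, hb]
      rw [show ((PresentedGroup.of 0 : B) * PresentedGroup.of 1) ^ (m / 2) *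
            (PresentedGroup.of 0 : B) ^ (m % 2) *
            (((PresentedGroup.of 1 : B) * PresentedGroup.of 0) ^ (m / 2) *
            (PresentedGroup.of 1 : B) ^ (m % 2))⁻¹ =
          PresentedGroup.mk ({braidRelator m} : Set (FreeGroup (Fin 2))) (braidRelator m) from by
        rw [braidRelator]
        simp only [_root_.map_mul, _root_.map_inv, _root_.map_pow]
        rfl]
      exact relator_eq_one' rfl
    rw [hdiv, hmod, pow_one, pow_one, mul_inv_eq_one] at h1
    exact h1
  -- the torus relation in T
  have htr : u ^ 2 = v ^ (2 * k + 1) := by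
    have h1 : u ^ 2 * (v ^ m)⁻¹ = 1 := by
      rw [hu, hv]
      rw [show ((PresentedGroup.of 0 : T)) ^ 2 * (((PresentedGroup.of 1 : T)) ^ m)⁻¹ =
          PresentedGroup.mk ({torusRelator m} : Set (FreeGroup (Fin 2))) (torusRelator m) from by
        rw [torusRelator]
        simp only [_root_.map_mul, _root_.map_inv, _root_.map_pow]
        rfl]
      exact relator_eq_one' rfl
    rw [mul_inv_eq_one] at h1
    exact h1.trans (congrArg (fun n => v ^ n) hk')
  -- the forward map
  have hf : ∀ r ∈ ({torusRelator m} : Set (FreeGroup (Fin 2))),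
      FreeGroup.lift (![(a * b) ^ k * a, a * b] : Fin 2 → B) r = 1 := by
    intro r hr
    rw [Set.mem_singleton_iff] at hr
    subst hr
    rw [torusRelator, _root_.map_mul, _root_.map_inv, mul_inv_eq_one, _root_.map_pow,
      _root_.map_pow]
    simp only [FreeGroup.lift_apply_of, Matrix.cons_val_zero, Matrix.cons_val_one, Matrix.head_cons]
    have h2 : ((a * b) ^ k * a) ^ 2 = (a * b) ^ (2 * k + 1) := torus_rel_holds a b k hbr
    rw [← hk'] at h2
    exact h2
  have hg : ∀ r ∈ ({braidRelator m} : Set (FreeGroup (Fin 2))),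
      FreeGroup.lift (![(v ^ k)⁻¹ * u, u⁻¹ * v ^ (k + 1)] : Fin 2 → T) r = 1 := by
    intro r hr
    rw [Set.mem_singleton_iff] at hr
    subst hr
    rw [braidRelator, hdiv, hmod, _root_.map_mul, _root_.map_inv, mul_inv_eq_one]
    simp only [_root_.map_mul, _root_.map_pow, pow_one, FreeGroup.lift_apply_of,
      Matrix.cons_val_zero, Matrix.cons_val_one, Matrix.head_cons]
    exact braid_rel_holds u v k htr
  have hfu : (PresentedGroup.toGroup hf) u = (a * b) ^ k * a := PresentedGroup.toGroup.of hf
  have hfv : (PresentedGroup.toGroup hf) v = a * b := PresentedGroup.toGroup.of hf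
  have hga : (PresentedGroup.toGroup hg) a = (v ^ k)⁻¹ * u := PresentedGroup.toGroup.of hg
  have hgb : (PresentedGroup.toGroup hg) b = u⁻¹ * v ^ (k + 1) := PresentedGroup.toGroup.of hg
  have hgab : (PresentedGroup.toGroup hg) a * (PresentedGroup.toGroup hg) b = v := by
    rw [hga, hgb]; group
  have hgf : (PresentedGroup.toGroup hg).comp (PresentedGroup.toGroup hf) = MonoidHom.id T := by
    ext x
    fin_cases x
    · show (PresentedGroup.toGroup hg) ((PresentedGroup.toGroup hf) u) = u
      rw [hfu, _root_.map_mul, _root_.map_pow, _root_.map_mul, hgab, hga]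
      group
    · show (PresentedGroup.toGroup hg) ((PresentedGroup.toGroup hf) v) = v
      rw [hfv, _root_.map_mul, hgab]
  have hfg : (PresentedGroup.toGroup hf).comp (PresentedGroup.toGroup hg) = MonoidHom.id B := by
    ext x
    fin_cases x
    · show (PresentedGroup.toGroup hf) ((PresentedGroup.toGroup hg) a) = a
      rw [hga, _root_.map_mul, _root_.map_inv, _root_.map_pow, hfv, hfu]
      group
    · show (PresentedGroup.toGroup hf) ((PresentedGroup.toGroup hg) b) = b
      rw [hgb, _root_.map_mul, _root_.map_inv, _root_.map_pow, hfv, hfu, pow_succ]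
      group
  refine ⟨MonoidHom.toMulEquiv (PresentedGroup.toGroup hf) (PresentedGroup.toGroup hg) hgf hfg,
    ?_, ?_⟩
  · show (PresentedGroup.toGroup hf) u = (a * b) ^ ((m - 1) / 2) * a
    rw [hsub]; exact hfu
  · show (PresentedGroup.toGroup hf) v = a * b
    exact hfv
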